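/- arXiv:2504.15413 — 2 statements merged into one kernel-verified Lean document; each statement's English description precedes it below -/
import Mathlib

section
/- For a word w of weight λ (a partition of m) and a word t of weight λ' (the conjugate partition), the blockwise signature sgn_t(w) is nonzero if and only if the multiset of pairs {(w_i, t_i) : i ∈ [m]} equals the set of cells {(i,j) : 1 ≤ i ≤ ℓ(λ), 1 ≤ j ≤ λ_i} of the Young diagram of λ. -/
open Finset

/-- Number of inversions of a word given as a list. -/
def invCount : List ℕ → ℕ
  | [] => 0
  | a :: l => l.countP (fun b => decide (b < a)) + invCount l

/-- Sign of a finite sequence: its permutation sign if it is a permutation of `1,…,k`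
(`k` = its length), and `0` otherwise. -/
def seqSgn (l : List ℕ) : ℤ :=
  if (l : Multiset ℕ) = ((List.range' 1 l.length : List ℕ) : Multiset ℕ) then
    (-1) ^ invCount l
  else 0

/-- Positions (in increasing order) of the letter `i` in the word `s`. -/
def blockList {m : ℕ} (s : Fin m → ℕ) (i : ℕ) : List (Fin m) :=
  (List.finRange m).filter (fun p => decide (s p = i))

/-- The blockwise signature `sgn_s(σ)`: the product over the blocks of `s` of the signs of
`σ` read along the block (in increasing position order). -/
def sgnWord {m : ℕ} (s σ : Fin m → ℕ) : ℤ :=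
  ∏ i ∈ Finset.range m, seqSgn ((blockList s (i + 1)).map σ)

/-- The action of `S_m` on words of length `m` by permuting positions: `(π·t) i = t (π⁻¹ i)`. -/
def pact {m : ℕ} (π : Equiv.Perm (Fin m)) (t : Fin m → ℕ) : Fin m → ℕ :=
  fun p => t (π⁻¹ p)

/-- `w` is a word of weight `L`: the letter `i+1` occurs exactly `L.getD i 0` times. -/
def hasWeight {m : ℕ} (w : Fin m → ℕ) (L : List ℕ) : Prop :=
  ∀ i : ℕ, (Finset.univ.filter (fun p => w p = i + 1)).card = L.getD i 0

/-- `L` is a partition of `m`. -/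
def IsPartitionOf (m : ℕ) (L : List ℕ) : Prop :=
  L.Pairwise (· ≥ ·) ∧ (∀ p ∈ L, 0 < p) ∧ L.sum = m

/-- The conjugate partition, as a list: its `j`-th part is `#{i : L i ≥ j+1}`. -/
def conjList (L : List ℕ) : List ℕ :=
  (List.range (L.headD 0)).map (fun j => L.countP (fun p => decide (j + 1 ≤ p)))

/-- The inversion sign `(−1)^w` of a word. -/
def wordSign {m : ℕ} (w : Fin m → ℕ) : ℤ :=
  (-1) ^ invCount ((List.finRange m).map w)

/-- The inversion sign `(−1)^λ` of a partition: the inversion sign of the word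
`1 2 … λ₁ 1 2 … λ₂ ⋯`. -/
def partSign (L : List ℕ) : ℤ :=
  (-1) ^ invCount ((L.map (fun p => List.range' 1 p)).flatten)

-- auxiliary lemmas

lemma seqSgn_ne_zero (l : List ℕ) :
    seqSgn l ≠ 0 ↔ (l : Multiset ℕ) = ((List.range' 1 l.length : List ℕ) : Multiset ℕ) := by
  unfold seqSgn
  constructor
  · intro h
    by_contra hc
    rw [if_neg hc] at h
    exact h rfl
  · intro h
    rw [if_pos h]
    exact pow_ne_zero _ (by norm_num)

lemma flatMap_ite {α β : Type*} (l : List α) (P : α → Bool) (g : α → β) :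
    l.flatMap (fun i => if P i then [g i] else []) = (l.filter P).map g := by
  induction l with
  | nil => rfl
  | cons a l ih =>
    cases h : P a <;> simp [List.filter_cons, h, ih]

lemma range'_one (n : ℕ) : List.range' 1 n = (List.range n).map (· + 1) := by
  rw [List.range'_eq_map_range]
  exact List.map_congr_left (fun a _ => Nat.add_comm 1 a)

lemma range_filter_eq (n a : ℕ) :
    (List.range n).filter (fun j => decide (j = a)) = if a < n then [a] else [] := by
  induction n with
  | zero => simp
  | succ n ih =>
    rw [List.range_succ, List.filter_append, ih]
    by_cases h : a < n
    · rw [if_pos h, if_pos (Nat.lt_succ_of_lt h)]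
      simp [Nat.ne_of_gt h]
    · by_cases h2 : a = n
      · subst h2
        simp [h]
      · rw [if_neg h, if_neg (by omega)]
        simp [Ne.symm h2, h2]

lemma headD_le_of_sorted {L : List ℕ} (h : L.Pairwise (· ≥ ·)) :
    ∀ p ∈ L, p ≤ L.headD 0 := by
  cases L with
  | nil => simp
  | cons a L =>
    intro p hp
    rcases List.mem_cons.mp hp with h1 | h1
    · simp [h1]
    · exact (List.pairwise_cons.mp h).1 p h1

lemma filter_range_sorted (j : ℕ) : ∀ (L : List ℕ), L.Pairwise (· ≥ ·) →
    (List.range L.length).filter (fun i => decide (j + 1 ≤ L.getD i 0))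
      = List.range (L.countP (fun p => decide (j + 1 ≤ p)))
  | [], _ => rfl
  | a :: L, h => by
    have hs := List.pairwise_cons.mp h
    have ih := filter_range_sorted j L hs.2
    rw [List.length_cons, List.range_succ_eq_map, List.filter_cons, List.filter_map,
      List.countP_cons]
    have hcomp : ((fun i => decide (j + 1 ≤ (a :: L).getD i 0)) ∘ Nat.succ)
        = fun i => decide (j + 1 ≤ L.getD i 0) := by
      funext i; rfl
    rw [hcomp, ih]
    by_cases hp : j + 1 ≤ a
    · rw [if_pos (show (decide (j + 1 ≤ (a :: L).getD 0 0)) = true by simp [hp])]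
      have h1 : (if decide (j + 1 ≤ a) = true then 1 else 0) = 1 := by simp [hp]
      rw [h1, List.range_succ_eq_map]
    · have hz : L.countP (fun p => decide (j + 1 ≤ p)) = 0 := by
        rw [List.countP_eq_zero]
        intro b hb
        simp only [decide_eq_true_eq]
        have := hs.1 b hb
        omega
      rw [if_neg (show ¬(decide (j + 1 ≤ (a :: L).getD 0 0)) = true by simp [hp])]
      have h1 : (if decide (j + 1 ≤ a) = true then 1 else 0) = 0 := by simp [hp]
      rw [h1, hz]
      simp

lemma conjList_getD {L : List ℕ} (h : L.Pairwise (· ≥ ·)) (j : ℕ) :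
    (conjList L).getD j 0 = L.countP (fun p => decide (j + 1 ≤ p)) := by
  by_cases hj : j < L.headD 0
  · have hlen : j < (conjList L).length := by
      simp only [conjList, List.length_map, List.length_range]
      exact hj
    rw [List.getD_eq_getElem _ _ hlen]
    simp [conjList]
  · have h1 : (conjList L).getD j 0 = 0 := by
      apply List.getD_eq_default
      simp only [conjList, List.length_map, List.length_range]
      omega
    have h2 : L.countP (fun p => decide (j + 1 ≤ p)) = 0 := by
      rw [List.countP_eq_zero]
      intro p hp
      have := headD_le_of_sorted h p hp
      simp only [decide_eq_true_eq]
      omega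
    rw [h1, h2]

lemma sum_countP (K : ℕ) : ∀ (L : List ℕ), (∀ p ∈ L, p ≤ K) →
    ∑ j ∈ Finset.range K, L.countP (fun p => decide (j + 1 ≤ p)) = L.sum
  | [], _ => by simp
  | a :: L, h => by
    have ih := sum_countP K L (fun p hp => h p (List.mem_cons_of_mem a hp))
    simp only [List.countP_cons, List.sum_cons]
    rw [Finset.sum_add_distrib, ih]
    have ha : a ≤ K := h a List.mem_cons_self
    have : ∑ j ∈ Finset.range K, (if (decide (j + 1 ≤ a)) = true then 1 else 0)
        = ((Finset.range K).filter (fun j => j + 1 ≤ a)).card := by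
      rw [Finset.card_filter]
      exact Finset.sum_congr rfl (fun j _ => by simp)
    rw [this]
    have : (Finset.range K).filter (fun j => j + 1 ≤ a) = Finset.range a := by
      ext j
      simp only [Finset.mem_filter, Finset.mem_range]
      omega
    rw [this, Finset.card_range]
    omega


lemma flatMap_ite' {α β : Type*} (l : List α) (P : α → Prop) [DecidablePred P] (g : α → β) :
    l.flatMap (fun i => if P i then [g i] else [])
      = (l.filter (fun i => decide (P i))).map g := by
  induction l with
  | nil => rfl
  | cons a l ih =>
    by_cases h : P a <;> simp [List.filter_cons, h, ih]

/-- For a word `w` of weight `λ` and a word `t` of weight `λ'`, the blockwise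
signature `sgn_t(w)` is nonzero iff the multiset of pairs `{(w_i, t_i)}` equals the set of cells
of the Young diagram of `λ`. -/
theorem stmt0 {m : ℕ} (L : List ℕ) (hL : IsPartitionOf m L)
    (w t : Fin m → ℕ) (hw : hasWeight w L) (ht : hasWeight t (conjList L)) :
    sgnWord t w ≠ 0 ↔
      (((List.finRange m).map (fun p => (w p, t p)) : List (ℕ × ℕ)) : Multiset (ℕ × ℕ)) =
        ((((List.range L.length).flatMap
            (fun i => (List.range (L.getD i 0)).map (fun j => (i + 1, j + 1)))) :
          List (ℕ × ℕ)) : Multiset (ℕ × ℕ)) := by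
  obtain ⟨hsort, -, hsum⟩ := hL
  set c : ℕ → ℕ := fun j => L.countP (fun p => decide (j + 1 ≤ p)) with hc
  have hparts : ∀ p ∈ L, p ≤ m := by
    intro p hp
    calc p ≤ L.sum := List.single_le_sum (fun x _ => Nat.zero_le x) p hp
      _ = m := hsum
  have hcard : ∀ j, (Finset.univ.filter (fun p => t p = j + 1)).card = c j :=
    fun j => (ht j).trans (conjList_getD hsort j)
  have hfin : ∀ j, ((Finset.univ.filter (fun p => t p = j + 1)).val : Multiset (Fin m))
      = ↑((List.finRange m).filter (fun p => decide (t p = j + 1))) := fun j => rfl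
  have hblock : ∀ j, (blockList t (j + 1)).length = c j := by
    intro j
    rw [← hcard j]
    have h1 : (Finset.univ.filter (fun p => t p = j + 1)).card
        = Multiset.card ((Finset.univ.filter (fun p => t p = j + 1)).val) := rfl
    rw [h1, hfin j, Multiset.coe_card]
    rfl
  have ht0 : ∀ p, t p ≠ 0 := by
    have hdisj : ∀ i ∈ Finset.range m, ∀ j ∈ Finset.range m, i ≠ j →
        Disjoint (Finset.univ.filter (fun p => t p = i + 1))
          (Finset.univ.filter (fun p => t p = j + 1)) := by
      intro i _ j _ hij
      rw [Finset.disjoint_left]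
      intro p hp1 hp2
      simp only [Finset.mem_filter] at hp1 hp2
      omega
    have hcardB : ((Finset.range m).biUnion
        (fun j => Finset.univ.filter (fun p => t p = j + 1))).card = m := by
      rw [Finset.card_biUnion hdisj]
      calc ∑ j ∈ Finset.range m, (Finset.univ.filter (fun p => t p = j + 1)).card
          = ∑ j ∈ Finset.range m, c j := Finset.sum_congr rfl (fun j _ => hcard j)
        _ = L.sum := sum_countP m L hparts
        _ = m := hsum
    have hBuniv := Finset.eq_univ_of_card _ (hcardB.trans (Fintype.card_fin m).symm)
    intro p
    have hp : p ∈ (Finset.range m).biUnion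
        (fun j => Finset.univ.filter (fun q => t q = j + 1)) := by
      rw [hBuniv]; exact Finset.mem_univ p
    obtain ⟨j, -, hj⟩ := Finset.mem_biUnion.mp hp
    have := (Finset.mem_filter.mp hj).2
    omega
  have hcm : ∀ j, m ≤ j → c j = 0 := by
    intro j hj
    rw [hc]
    rw [List.countP_eq_zero]
    intro p hp
    have := hparts p hp
    simp only [decide_eq_true_eq]
    omega
  have hsgn : sgnWord t w ≠ 0 ↔
      ∀ j : ℕ, (((blockList t (j + 1)).map w : List ℕ) : Multiset ℕ)
        = ↑(List.range' 1 (c j)) := by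
    unfold sgnWord
    rw [Finset.prod_ne_zero_iff]
    constructor
    · intro h j
      by_cases hj : j < m
      · have h2 := (seqSgn_ne_zero _).mp (h j (Finset.mem_range.mpr hj))
        rwa [List.length_map, hblock j] at h2
      · have hc0 : c j = 0 := hcm j (le_of_not_gt hj)
        have hb : blockList t (j + 1) = [] :=
          List.length_eq_zero_iff.mp (by rw [hblock j, hc0])
        rw [hb, hc0]
        rfl
    · intro h i _
      rw [seqSgn_ne_zero, List.length_map, hblock i]
      exact h i
  set M : Multiset (ℕ × ℕ) :=
    (((List.finRange m).map (fun p => (w p, t p)) : List (ℕ × ℕ)) : Multiset (ℕ × ℕ)) with hM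
  set N : Multiset (ℕ × ℕ) :=
    ((((List.range L.length).flatMap
        (fun i => (List.range (L.getD i 0)).map (fun j => (i + 1, j + 1)))) :
      List (ℕ × ℕ)) : Multiset (ℕ × ℕ)) with hN
  have hMfilter : ∀ j : ℕ, Multiset.filter (fun x => x.2 = j + 1) M
      = ↑(((blockList t (j + 1)).map w).map (fun a => (a, j + 1))) := by
    intro j
    rw [hM]
    have hstep : Multiset.filter (fun x : ℕ × ℕ => x.2 = j + 1)
        ↑((List.finRange m).map (fun p => (w p, t p)))
        = ↑(((List.finRange m).map (fun p => (w p, t p))).filter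
            (fun x => decide (x.2 = j + 1))) := rfl
    rw [hstep]
    congr 1
    rw [List.filter_map, List.map_map]
    have hfe : ((fun x : ℕ × ℕ => decide (x.2 = j + 1)) ∘ (fun p => (w p, t p)))
        = fun p => decide (t p = j + 1) := rfl
    rw [hfe]
    apply List.map_congr_left
    intro p hp
    have hmem := List.of_mem_filter hp
    simp only [decide_eq_true_eq] at hmem
    simp [Function.comp, hmem]
  have hNfilter : ∀ j : ℕ, Multiset.filter (fun x => x.2 = j + 1) N
      = ↑((List.range' 1 (c j)).map (fun a => (a, j + 1))) := by
    intro j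
    rw [hN]
    have hstep : Multiset.filter (fun x : ℕ × ℕ => x.2 = j + 1)
        ↑((List.range L.length).flatMap
          (fun i => (List.range (L.getD i 0)).map (fun jj => (i + 1, jj + 1))))
        = ↑(((List.range L.length).flatMap
          (fun i => (List.range (L.getD i 0)).map (fun jj => (i + 1, jj + 1)))).filter
            (fun x => decide (x.2 = j + 1))) := rfl
    rw [hstep]
    congr 1
    rw [List.filter_flatMap]
    have h1 : ∀ i ∈ List.range L.length,
        ((List.range (L.getD i 0)).map (fun jj => (i + 1, jj + 1))).filter
          (fun x => decide (x.2 = j + 1))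
        = if j + 1 ≤ L.getD i 0 then [(i + 1, j + 1)] else [] := by
      intro i _
      rw [List.filter_map]
      have hfe : ((fun x : ℕ × ℕ => decide (x.2 = j + 1)) ∘ (fun jj => (i + 1, jj + 1)))
          = fun jj => decide (jj = j) := by
        funext jj
        simp [Function.comp]
      rw [hfe, _root_.range_filter_eq]
      by_cases hij : j < L.getD i 0
      · have hij2 : j + 1 ≤ L.getD i 0 := hij
        rw [if_pos hij, if_pos hij2]
        rfl
      · have hij2 : ¬ (j + 1 ≤ L.getD i 0) := hij
        rw [if_neg hij, if_neg hij2]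
        rfl
    rw [List.flatMap_congr h1]
    rw [flatMap_ite' (List.range L.length) (fun i => j + 1 ≤ L.getD i 0)
      (fun i => (i + 1, j + 1))]
    rw [filter_range_sorted j L hsort, range'_one, List.map_map]
    rfl
  have hM0 : Multiset.filter (fun x : ℕ × ℕ => x.2 = 0) M = 0 := by
    rw [Multiset.filter_eq_nil]
    intro x hx
    rw [hM] at hx
    simp only [Multiset.mem_coe, List.mem_map] at hx
    obtain ⟨p, -, rfl⟩ := hx
    exact ht0 p
  have hN0 : Multiset.filter (fun x : ℕ × ℕ => x.2 = 0) N = 0 := by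
    rw [Multiset.filter_eq_nil]
    intro x hx
    rw [hN] at hx
    simp only [Multiset.mem_coe, List.mem_flatMap, List.mem_map] at hx
    obtain ⟨i, -, jj, -, rfl⟩ := hx
    simp
  have hdecomp : M = N ↔ ∀ j : ℕ, Multiset.filter (fun x : ℕ × ℕ => x.2 = j) M
      = Multiset.filter (fun x : ℕ × ℕ => x.2 = j) N := by
    constructor
    · intro h j
      rw [h]
    · intro h
      ext x
      calc M.count x = (Multiset.filter (fun y : ℕ × ℕ => y.2 = x.2) M).count x := by
            rw [Multiset.count_filter, if_pos rfl]
        _ = (Multiset.filter (fun y : ℕ × ℕ => y.2 = x.2) N).count x := by rw [h x.2]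
        _ = N.count x := by rw [Multiset.count_filter, if_pos rfl]
  rw [hsgn, hdecomp]
  constructor
  · intro h j
    cases j with
    | zero => rw [hM0, hN0]
    | succ j =>
      rw [hMfilter j, hNfilter j]
      calc (↑(((blockList t (j + 1)).map w).map (fun a => (a, j + 1))) : Multiset (ℕ × ℕ))
          = Multiset.map (fun a => (a, j + 1)) ↑((blockList t (j + 1)).map w) := by
            rw [Multiset.map_coe]
        _ = Multiset.map (fun a => (a, j + 1)) ↑(List.range' 1 (c j)) := by rw [h j]
        _ = ↑((List.range' 1 (c j)).map (fun a => (a, j + 1))) := by rw [Multiset.map_coe]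
  · intro h j
    have h2 := h (j + 1)
    rw [hMfilter j, hNfilter j] at h2
    have hinj : Function.Injective (fun a : ℕ => (a, j + 1)) :=
      fun a b hab => congrArg Prod.fst hab
    apply Multiset.map_injective hinj
    rw [← Multiset.map_coe, ← Multiset.map_coe] at h2
    exact h2
end

section
/- Let λ ⊢ m, s a word of weight λ and t a word of weight λ'. The quantity sgn_s(π·t) · sgn(π) · sgn_t(π⁻¹·s) is the same for every π in the double coset G(s,t) = {π : sgn_s(π·t) ≠ 0}; i.e., it is an invariant of the double coset. -/
open Finset

/-- The Young subgroup `Y_s`: the stabilizer of the word `s` in `S_m`. -/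
def Ysub {m : ℕ} (s : Fin m → ℕ) : Set (Equiv.Perm (Fin m)) := {π | pact π s = s}

/-- `G(s,t) = {π ∈ S_m : sgn_s(π·t) ≠ 0}`. -/
def Gst {m : ℕ} (s t : Fin m → ℕ) : Set (Equiv.Perm (Fin m)) :=
  {π | sgnWord s (pact π t) ≠ 0}

theorem signAux_eq_sign {n : ℕ} (f : Equiv.Perm (Fin n)) :
    Equiv.Perm.signAux f = Equiv.Perm.sign f := by
  match n with
  | 0 =>
    have : f = 1 := Subsingleton.elim _ _
    subst this; simp [Equiv.Perm.signAux_one]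
  | 1 =>
    have : f = 1 := by
      ext x; omega
    subst this; simp [Equiv.Perm.signAux_one]
  | (n+2) =>
    have hsur : Function.Surjective (MonoidHom.mk' (Equiv.Perm.signAux (n := n+2)) Equiv.Perm.signAux_mul) := by
      intro u
      rcases Int.units_eq_one_or u with rfl | rfl
      · exact ⟨1, Equiv.Perm.signAux_one _⟩
      · refine ⟨Equiv.swap (0 : Fin (n+2)) 1, ?_⟩
        have h01 : (0 : Fin (n+2)) ≠ 1 := by
          simp [Fin.ext_iff]
        exact Equiv.Perm.signAux_swap h01
    have := Equiv.Perm.eq_sign_of_surjective_hom hsur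
    exact DFunLike.congr_fun this f

theorem invCount_nil : invCount [] = 0 := rfl

theorem invCount_cons (a : ℕ) (l : List ℕ) :
    invCount (a :: l) = l.countP (fun b => decide (b < a)) + invCount l := rfl

theorem countP_ofFn {n : ℕ} (f : Fin n → ℕ) (p : ℕ → Bool) :
    (List.ofFn f).countP p = ∑ j : Fin n, if p (f j) then 1 else 0 := by
  induction n with
  | zero => rfl
  | succ n ih =>
    rw [List.ofFn_succ, List.countP_cons, Fin.sum_univ_succ, ih (fun j => f j.succ)]
    omega

theorem invCount_ofFn {n : ℕ} (g : Fin n → ℕ) :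
    invCount (List.ofFn g) =
      ∑ a : Fin n, ∑ b : Fin n, if b < a ∧ g a < g b then 1 else 0 := by
  induction n with
  | zero => simp [invCount_nil]
  | succ n ih =>
    rw [List.ofFn_succ, invCount_cons, countP_ofFn, ih (fun i => g i.succ)]
    simp only [Fin.sum_univ_succ, Fin.not_lt_zero, false_and, if_false, Finset.sum_const_zero,
      Fin.succ_pos, true_and, Fin.succ_lt_succ_iff, Function.comp, decide_eq_true_iff, zero_add]
    rw [Finset.sum_add_distrib]

theorem pow_invCount_eq_signAux {n : ℕ} (g : Fin n → ℕ)
    (P : Equiv.Perm (Fin n)) (hP : ∀ x y : Fin n, x ≠ y → ((P x ≤ P y) ↔ (g x < g y))) :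
    ((-1 : ℤˣ)) ^ invCount (List.ofFn g) = Equiv.Perm.signAux P := by
  rw [invCount_ofFn]
  unfold Equiv.Perm.signAux Equiv.Perm.finPairsLT
  rw [Finset.prod_sigma]
  have hset : ∀ a : Fin n, ((Finset.range (a : ℕ)).attachFin
      (fun _ hm => (Finset.mem_range.1 hm).trans a.2)) = Finset.univ.filter (· < a) := by
    intro a
    ext b
    simp only [Finset.mem_attachFin, Finset.mem_range, Finset.mem_filter, Finset.mem_univ,
      true_and, Fin.lt_iff_val_lt_val]
  have : ∀ a : Fin n, (∏ b ∈ ((Finset.range (a : ℕ)).attachFin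
        (fun _ hm => (Finset.mem_range.1 hm).trans a.2)),
        (if P a ≤ P b then (-1 : ℤˣ) else 1))
      = ∏ b : Fin n, ((-1 : ℤˣ)) ^ (if b < a ∧ g a < g b then 1 else 0) := by
    intro a
    rw [hset a, Finset.prod_filter]
    apply Finset.prod_congr rfl
    intro b _
    by_cases hba : b < a
    · have hne : b ≠ a := ne_of_lt hba
      rw [if_pos hba]
      by_cases hg : g a < g b
      · rw [if_pos ((hP a b hne.symm).mpr hg), if_pos ⟨hba, hg⟩, pow_one]
      · rw [if_neg (fun h => hg ((hP a b hne.symm).mp h)), if_neg (by tauto), pow_zero]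
    · rw [if_neg hba, if_neg (by tauto), pow_zero]
  rw [Finset.prod_congr rfl (fun a _ => this a)]
  have h2 : ∀ a : Fin n, (∏ b : Fin n, ((-1 : ℤˣ)) ^ (if b < a ∧ g a < g b then 1 else 0))
      = ((-1 : ℤˣ)) ^ (∑ b : Fin n, if b < a ∧ g a < g b then 1 else 0) :=
    fun a => Finset.prod_pow_eq_pow_sum _ _ _
  rw [Finset.prod_congr rfl (fun a _ => h2 a), Finset.prod_pow_eq_pow_sum]

theorem multiset_ofFn_comp_perm (l : List ℕ) (e : Equiv.Perm (Fin l.length)) :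
    ((List.ofFn (fun j => l.get (e j)) : List ℕ) : Multiset ℕ) = (l : Multiset ℕ) := by
  rw [List.ofFn_eq_map]
  have h1 : ((List.map (fun j => l.get (e j)) (List.finRange l.length) : List ℕ) : Multiset ℕ)
      = Multiset.map l.get (Multiset.map ⇑e ↑(List.finRange l.length)) := by
    rw [← Multiset.map_coe, Multiset.map_map]
    rfl
  rw [h1]
  have h2 : Multiset.map ⇑e ↑(List.finRange l.length) = ↑(List.finRange l.length) := by
    have hnd : (↑(List.finRange l.length) : Multiset (Fin l.length)).Nodup :=
      (Multiset.coe_nodup).mpr (List.nodup_finRange _)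
    rw [Multiset.Nodup.ext (hnd.map e.injective) hnd]
    intro x
    simp only [Multiset.mem_coe, List.mem_finRange, iff_true, Multiset.mem_map]
    exact ⟨e.symm x, by simp, by simp⟩
  rw [h2, Multiset.map_coe]
  have : List.map l.get (List.finRange l.length) = List.ofFn l.get := (List.ofFn_eq_map).symm
  rw [this, List.ofFn_get]

theorem seqSgn_ofFn_perm (l : List ℕ) (e : Equiv.Perm (Fin l.length)) :
    seqSgn (List.ofFn (fun j => l.get (e j))) = ((Equiv.Perm.sign e : ℤˣ) : ℤ) * seqSgn l := by
  have hlen : (List.ofFn (fun j => l.get (e j))).length = l.length := by rw [List.length_ofFn]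
  have hmul : ((List.ofFn (fun j => l.get (e j)) : List ℕ) : Multiset ℕ) = (l : Multiset ℕ) :=
    multiset_ofFn_comp_perm l e
  by_cases hc : (l : Multiset ℕ) = ((List.range' 1 l.length : List ℕ) : Multiset ℕ)
  · have hc' : ((List.ofFn (fun j => l.get (e j)) : List ℕ) : Multiset ℕ)
        = ((List.range' 1 (List.ofFn (fun j => l.get (e j))).length : List ℕ) : Multiset ℕ) := by
      rw [hmul, hlen]; exact hc
    have hnd : l.Nodup := by
      rw [← Multiset.coe_nodup, hc, Multiset.coe_nodup]
      exact List.nodup_range'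
    have hval : ∀ j : Fin l.length, 1 ≤ l.get j ∧ l.get j < 1 + l.length := by
      intro j
      have hm : l.get j ∈ l := l.get_mem _
      have h2 : l.get j ∈ (l : Multiset ℕ) := hm
      rw [hc] at h2
      exact List.mem_range'_1.mp h2
    have hinj : Function.Injective l.get := List.nodup_iff_injective_get.mp hnd
    set f : Fin l.length → Fin l.length :=
      fun j => (⟨l.get j - 1, by have := hval j; omega⟩ : Fin l.length) with hf
    have hfinj : Function.Injective f := by
      intro a b hab
      apply hinj
      have h1 := hval a; have h2 := hval b
      have hv : l.get a - 1 = l.get b - 1 := congrArg Fin.val hab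
      omega
    set P : Equiv.Perm (Fin l.length) :=
      Equiv.ofBijective f ((Finite.injective_iff_bijective).mp hfinj) with hPdef
    have hPapp : ∀ j, P j = f j := fun j => rfl
    have hP : ∀ x y : Fin l.length, x ≠ y → (P x ≤ P y ↔ l.get x < l.get y) := by
      intro x y hxy
      have h1 := hval x; have h2 := hval y
      have hne : l.get x ≠ l.get y := fun h => hxy (hinj h)
      rw [hPapp, hPapp, Fin.le_def]
      simp only [hf]
      omega
    have key : ((-1 : ℤˣ)) ^ invCount (List.ofFn (fun j => l.get (e j)))
        = Equiv.Perm.sign e * ((-1 : ℤˣ)) ^ invCount l := by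
      have h2 := pow_invCount_eq_signAux (fun j => l.get (e j)) (P * e)
        (by
          intro x y hxy
          have := hP (e x) (e y) (fun h => hxy (e.injective h))
          simpa [Equiv.Perm.mul_apply] using this)
      have h1 := pow_invCount_eq_signAux l.get P (by intro x y hxy; exact hP x y hxy)
      rw [List.ofFn_get] at h1
      rw [h2, Equiv.Perm.signAux_mul, ← h1, signAux_eq_sign, mul_comm]
    rw [seqSgn, if_pos hc', seqSgn, if_pos hc]
    have := congrArg (Units.val : ℤˣ → ℤ) key
    simpa [Units.val_pow_eq_pow_val] using this
  · have hc' : ¬(((List.ofFn (fun j => l.get (e j)) : List ℕ) : Multiset ℕ)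
        = ((List.range' 1 (List.ofFn (fun j => l.get (e j))).length : List ℕ) : Multiset ℕ)) := by
      rw [hmul, hlen]; exact hc
    rw [seqSgn, if_neg hc', seqSgn, if_neg hc]
    ring

theorem seqSgn_perm_of_get (l l' : List ℕ) (e : Equiv.Perm (Fin l.length))
    (hlen : l'.length = l.length)
    (hget : ∀ (j : ℕ) (h : j < l.length),
      l'[j]'(by rw [hlen]; exact h) = l.get (e ⟨j, h⟩)) :
    seqSgn l' = ((Equiv.Perm.sign e : ℤˣ) : ℤ) * seqSgn l := by
  have hl' : l' = List.ofFn (fun j => l.get (e j)) := by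
    apply List.ext_getElem (by rw [hlen, List.length_ofFn])
    intro j h1 h2
    rw [List.getElem_ofFn]
    exact hget j (by rw [← hlen]; exact h1)
  rw [hl']
  exact seqSgn_ofFn_perm l e

theorem mem_blockList {m : ℕ} (s : Fin m → ℕ) (i : ℕ) (p : Fin m) :
    p ∈ blockList s i ↔ s p = i := by
  simp [blockList, List.mem_filter, List.mem_finRange]

theorem nodup_blockList {m : ℕ} (s : Fin m → ℕ) (i : ℕ) : (blockList s i).Nodup :=
  (List.nodup_finRange m).filter _

theorem pact_mul {m : ℕ} (a b : Equiv.Perm (Fin m)) (w : Fin m → ℕ) :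
    pact (a * b) w = pact a (pact b w) := by
  funext p
  simp [pact, mul_inv_rev]

theorem pact_one {m : ℕ} (w : Fin m → ℕ) : pact 1 w = w := rfl

theorem sgnWord_comp_swap {m : ℕ} (s u : Fin m → ℕ) (p₁ p₂ : Fin m) (hne : p₁ ≠ p₂)
    (hsp : s p₁ = s p₂) (hrange : ∀ p : Fin m, ∃ i ∈ Finset.range m, s p = i + 1) :
    sgnWord s (u ∘ (Equiv.swap p₁ p₂)) = - sgnWord s u := by
  obtain ⟨i₀, hi₀mem, hi₀⟩ := hrange p₁
  unfold sgnWord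
  rw [← Finset.mul_prod_erase _ _ hi₀mem, ← Finset.mul_prod_erase _
    (fun i => seqSgn ((blockList s (i + 1)).map u)) hi₀mem]
  have hrest : ∀ i ∈ (Finset.range m).erase i₀,
      seqSgn ((blockList s (i + 1)).map (u ∘ Equiv.swap p₁ p₂))
        = seqSgn ((blockList s (i + 1)).map u) := by
    intro i hi
    have hii₀ : i ≠ i₀ := (Finset.mem_erase.mp hi).1
    congr 1
    apply List.map_congr_left
    intro q hq
    have hsq : s q = i + 1 := (mem_blockList s (i+1) q).mp hq
    have hq1 : q ≠ p₁ := fun h => hii₀ (by rw [h] at hsq; omega)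
    have hq2 : q ≠ p₂ := fun h => hii₀ (by rw [h, ← hsp] at hsq; omega)
    show u (Equiv.swap p₁ p₂ q) = u q
    rw [Equiv.swap_apply_of_ne_of_ne hq1 hq2]
  have hmain : seqSgn ((blockList s (i₀ + 1)).map (u ∘ Equiv.swap p₁ p₂))
      = - seqSgn ((blockList s (i₀ + 1)).map u) := by
    set B := blockList s (i₀ + 1) with hB
    have hp₁B : p₁ ∈ B := (mem_blockList s (i₀+1) p₁).mpr hi₀
    have hp₂B : p₂ ∈ B := (mem_blockList s (i₀+1) p₂).mpr (hsp ▸ hi₀)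
    obtain ⟨j₁, hj₁⟩ := List.get_of_mem hp₁B
    obtain ⟨j₂, hj₂⟩ := List.get_of_mem hp₂B
    have hnd : B.Nodup := nodup_blockList s _
    have hlenl : (B.map u).length = B.length := List.length_map _
    have hj₁l : (j₁ : ℕ) < (B.map u).length := by rw [hlenl]; exact j₁.2
    have hj₂l : (j₂ : ℕ) < (B.map u).length := by rw [hlenl]; exact j₂.2
    have hj₁₂ : (j₁ : ℕ) ≠ (j₂ : ℕ) := by
      intro h
      apply hne
      rw [← hj₁, ← hj₂]
      congr 1
      exact Fin.ext h
    set e : Equiv.Perm (Fin (B.map u).length) :=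
      Equiv.swap ⟨j₁, hj₁l⟩ ⟨j₂, hj₂l⟩ with he
    have hlen' : (B.map (u ∘ Equiv.swap p₁ p₂)).length = (B.map u).length := by
      rw [List.length_map, List.length_map]
    have hres := seqSgn_perm_of_get (B.map u) (B.map (u ∘ Equiv.swap p₁ p₂)) e hlen' ?_
    · rw [hres, he, Equiv.Perm.sign_swap
        (show (⟨↑j₁, hj₁l⟩ : Fin (List.map u B).length) ≠ ⟨↑j₂, hj₂l⟩ from Fin.ne_of_val_ne hj₁₂)]
      simp
    · intro j h
      have hjB : j < B.length := by rw [← hlenl]; exact h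
      rw [List.getElem_map]
      by_cases hc1 : j = (j₁ : ℕ)
      · have : (⟨j, h⟩ : Fin (B.map u).length) = ⟨j₁, hj₁l⟩ := Fin.ext hc1
        rw [this, he, Equiv.swap_apply_left]
        have hBj : B[j] = p₁ := by
          rw [← hj₁]
          simp [List.get_eq_getElem, hc1]
        rw [hBj]
        simp only [Function.comp_apply]
        rw [Equiv.swap_apply_left, List.get_eq_getElem, List.getElem_map]
        congr 1
        rw [← hj₂]
        simp [List.get_eq_getElem]
      · by_cases hc2 : j = (j₂ : ℕ)
        · have : (⟨j, h⟩ : Fin (B.map u).length) = ⟨j₂, hj₂l⟩ := Fin.ext hc2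
          rw [this, he, Equiv.swap_apply_right]
          have hBj : B[j] = p₂ := by
            rw [← hj₂]
            simp [List.get_eq_getElem, hc2]
          rw [hBj]
          simp only [Function.comp_apply]
          rw [Equiv.swap_apply_right, List.get_eq_getElem, List.getElem_map]
          congr 1
          rw [← hj₁]
          simp [List.get_eq_getElem]
        · have h1 : (⟨j, h⟩ : Fin (B.map u).length) ≠ ⟨j₁, hj₁l⟩ := Fin.ne_of_val_ne hc1
          have h2 : (⟨j, h⟩ : Fin (B.map u).length) ≠ ⟨j₂, hj₂l⟩ := Fin.ne_of_val_ne hc2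
          rw [he, Equiv.swap_apply_of_ne_of_ne h1 h2]
          have hB1 : B[j] ≠ p₁ := by
            intro hcon
            apply hc1
            have : B.get ⟨j, hjB⟩ = B.get j₁ := by
              rw [hj₁, List.get_eq_getElem]; exact hcon
            exact congrArg Fin.val ((List.Nodup.get_inj_iff hnd).mp this)
          have hB2 : B[j] ≠ p₂ := by
            intro hcon
            apply hc2
            have : B.get ⟨j, hjB⟩ = B.get j₂ := by
              rw [hj₂, List.get_eq_getElem]; exact hcon
            exact congrArg Fin.val ((List.Nodup.get_inj_iff hnd).mp this)
          rw [List.get_eq_getElem, List.getElem_map]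
          show u (Equiv.swap p₁ p₂ B[j]) = u B[j]
          rw [Equiv.swap_apply_of_ne_of_ne hB1 hB2]
  rw [hmain, Finset.prod_congr rfl hrest]
  ring

theorem sgnWord_pact_stab {m : ℕ} (s w : Fin m → ℕ)
    (hrange : ∀ p : Fin m, ∃ i ∈ Finset.range m, s p = i + 1)
    (α : Equiv.Perm (Fin m)) (hα : ∀ p, s (α p) = s p) :
    sgnWord s (pact α w) = ((Equiv.Perm.sign α : ℤˣ) : ℤ) * sgnWord s w := by
  generalize hcard : α.support.card = N
  induction N using Nat.strong_induction_on generalizing α with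
  | _ N ih =>
  by_cases h1 : α = 1
  · subst h1
    rw [pact_one]
    simp
  · have hex : ∃ p, α p ≠ p := by
      by_contra hcon
      push_neg at hcon
      exact h1 (Equiv.ext fun x => hcon x)
    obtain ⟨p, hp⟩ := hex
    have hswap_pres : ∀ x, s (Equiv.swap p (α p) x) = s x := by
      intro x
      rcases eq_or_ne x p with rfl | hx1
      · rw [Equiv.swap_apply_left]; first | exact hα p | exact hα x
      · rcases eq_or_ne x (α p) with rfl | hx2
        · rw [Equiv.swap_apply_right]; first | exact (hα p).symm | exact (hα x).symm
        · rw [Equiv.swap_apply_of_ne_of_ne hx1 hx2]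
    set α' := Equiv.swap p (α p) * α with hα'def
    have hα' : ∀ q, s (α' q) = s q := by
      intro q
      rw [hα'def, Equiv.Perm.mul_apply, hswap_pres, hα]
    have hcard' : α'.support.card < N := by
      rw [← hcard]
      exact Equiv.Perm.card_support_swap_mul hp
    have hIH := ih _ hcard' α' hα' rfl
    have hrec : α = Equiv.swap p (α p) * α' := by
      rw [hα'def, ← mul_assoc, Equiv.swap_mul_self, one_mul]
    rw [hrec, pact_mul]
    have hps : pact (Equiv.swap p (α p)) (pact α' w)
        = (pact α' w) ∘ (Equiv.swap p (α p)) := by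
      funext q
      simp [pact, Equiv.swap_inv]
    rw [hps, sgnWord_comp_swap s _ p (α p) (Ne.symm hp) (hα p).symm hrange, hIH]
    rw [Equiv.Perm.sign_mul, Equiv.Perm.sign_swap (Ne.symm hp)]
    push_cast
    ring_nf
    conv_lhs => rw [hrec]
    rw [Equiv.Perm.sign_mul, Equiv.Perm.sign_swap (Ne.symm hp)]
    push_cast
    ring

theorem sum_getD (L : List ℕ) : ∑ i ∈ Finset.range L.length, L.getD i 0 = L.sum := by
  induction L with
  | nil => simp
  | cons a t ih =>
    rw [List.length_cons, Finset.sum_range_succ']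
    simp only [List.getD_cons_succ, List.getD_cons_zero, List.sum_cons]
    rw [ih]
    ring

theorem length_le_sum (L : List ℕ) (h : ∀ x ∈ L, 0 < x) : L.length ≤ L.sum := by
  induction L with
  | nil => simp
  | cons a t ih =>
    simp only [List.length_cons, List.sum_cons]
    have h1 : 0 < a := h a (by simp)
    have h2 := ih (fun x hx => h x (by simp [hx]))
    omega

theorem weight_range {m : ℕ} (w : Fin m → ℕ) (L : List ℕ) (hw : hasWeight w L)
    (hpos : ∀ x ∈ L, 0 < x) (hsum : L.sum = m) :
    ∀ p : Fin m, ∃ i ∈ Finset.range m, w p = i + 1 := by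
  intro p
  have hNm : L.length ≤ m := hsum ▸ length_le_sum L hpos
  have hdisj : ∀ i ∈ Finset.range L.length, ∀ j ∈ Finset.range L.length, i ≠ j →
      Disjoint (Finset.univ.filter (fun p : Fin m => w p = i + 1))
        (Finset.univ.filter (fun p : Fin m => w p = j + 1)) := by
    intro i _ j _ hij
    rw [Finset.disjoint_left]
    intro a ha hb
    simp only [Finset.mem_filter] at ha hb
    omega
  have hcard : ((Finset.range L.length).biUnion
      (fun i => Finset.univ.filter (fun p : Fin m => w p = i + 1))).card = m := by
    rw [Finset.card_biUnion hdisj]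
    calc ∑ i ∈ Finset.range L.length, (Finset.univ.filter (fun p : Fin m => w p = i + 1)).card
        = ∑ i ∈ Finset.range L.length, L.getD i 0 := by
          exact Finset.sum_congr rfl (fun i _ => hw i)
      _ = L.sum := sum_getD L
      _ = m := hsum
  have huniv : ((Finset.range L.length).biUnion
      (fun i => Finset.univ.filter (fun p : Fin m => w p = i + 1))) = Finset.univ := by
    apply Finset.eq_univ_of_card
    rw [hcard, Fintype.card_fin]
  have hp : p ∈ (Finset.range L.length).biUnion
      (fun i => Finset.univ.filter (fun p : Fin m => w p = i + 1)) := by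
    rw [huniv]; exact Finset.mem_univ p
  rw [Finset.mem_biUnion] at hp
  obtain ⟨i, hi, hpi⟩ := hp
  refine ⟨i, ?_, (Finset.mem_filter.mp hpi).2⟩
  rw [Finset.mem_range] at hi ⊢
  omega

theorem sum_countP_le (L : List ℕ) (k : ℕ) :
    ∑ j ∈ Finset.range k, L.countP (fun p => decide (j + 1 ≤ p))
      = (L.map (fun p => min p k)).sum := by
  induction L with
  | nil => simp
  | cons a t ih =>
    simp only [List.map_cons, List.sum_cons]
    have : ∀ j, (a :: t).countP (fun p => decide (j + 1 ≤ p))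
        = t.countP (fun p => decide (j + 1 ≤ p)) + (if j + 1 ≤ a then 1 else 0) := by
      intro j
      rw [List.countP_cons]
      simp
    rw [Finset.sum_congr rfl (fun j _ => this j), Finset.sum_add_distrib, ih]
    have hcnt : ∑ j ∈ Finset.range k, (if j + 1 ≤ a then 1 else 0) = min a k := by
      rw [Finset.sum_ite, Finset.sum_const, Finset.sum_const]
      have : (Finset.range k).filter (fun j => j + 1 ≤ a) = Finset.range (min a k) := by
        ext j
        simp only [Finset.mem_filter, Finset.mem_range, lt_min_iff]
        omega
      rw [this, Finset.card_range]
      simp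
    rw [hcnt]
    ring

theorem conjList_sum (L : List ℕ) (hsort : L.Pairwise (· ≥ ·)) : (conjList L).sum = L.sum := by
  have hle : ∀ p ∈ L, p ≤ L.headD 0 := by
    cases L with
    | nil => simp
    | cons a t =>
      intro p hp
      rcases List.mem_cons.mp hp with rfl | hp'
      · simp
      · simpa using (List.pairwise_cons.mp hsort).1 p hp'
  have hrm : ∀ (n : ℕ) (f : ℕ → ℕ), ((List.range n).map f).sum = ∑ j ∈ Finset.range n, f j := by
    intro n f
    induction n with
    | zero => simp
    | succ n ih => rw [List.range_succ, List.map_append, List.sum_append, Finset.sum_range_succ, ih]; simp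
  rw [conjList, hrm, sum_countP_le]
  have : L.map (fun p => min p (L.headD 0)) = L.map id := by
    apply List.map_congr_left
    intro p hp
    have := hle p hp
    simp only [id]
    omega
  rw [this, List.map_id]

theorem conjList_pos (L : List ℕ) : ∀ x ∈ conjList L, 0 < x := by
  intro x hx
  rw [conjList] at hx
  obtain ⟨j, hj, rfl⟩ := List.mem_map.mp hx
  rw [List.mem_range] at hj
  rw [List.countP_pos_iff]
  cases L with
  | nil => simp at hj
  | cons a t =>
    refine ⟨a, by simp, ?_⟩
    simp only [List.headD_cons] at hj
    simp
    omega

theorem block_multiset_of_mem_Gst {m : ℕ} (s t : Fin m → ℕ) (π : Equiv.Perm (Fin m))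
    (hπ : π ∈ Gst s t) : ∀ i ∈ Finset.range m,
    (((blockList s (i+1)).map (pact π t) : List ℕ) : Multiset ℕ)
      = ((List.range' 1 ((blockList s (i+1)).map (pact π t)).length : List ℕ) : Multiset ℕ) := by
  intro i hi
  have hfac : seqSgn ((blockList s (i+1)).map (pact π t)) ≠ 0 := by
    intro h0
    exact hπ (Finset.prod_eq_zero hi h0)
  by_contra hcon
  exact hfac (by rw [seqSgn, if_neg hcon])

/-- The quantity `sgn_s(π·t)·sgn(π)·sgn_t(π⁻¹·s)` is the same for every
`π` in the double coset `G(s,t)`. -/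
theorem stmt3 {m : ℕ} (L : List ℕ) (hL : IsPartitionOf m L)
    (s t : Fin m → ℕ) (hs : hasWeight s L) (ht : hasWeight t (conjList L)) :
    ∀ π ∈ Gst s t, ∀ ρ ∈ Gst s t,
      sgnWord s (pact π t) * ((Equiv.Perm.sign π : ℤ)) * sgnWord t (pact π⁻¹ s) =
        sgnWord s (pact ρ t) * ((Equiv.Perm.sign ρ : ℤ)) * sgnWord t (pact ρ⁻¹ s) := by
  obtain ⟨hsort, hpos, hsum⟩ := hL
  have hranges : ∀ p : Fin m, ∃ i ∈ Finset.range m, s p = i + 1 :=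
    weight_range s L hs hpos hsum
  have hranget : ∀ p : Fin m, ∃ i ∈ Finset.range m, t p = i + 1 :=
    weight_range t (conjList L) ht (conjList_pos L) (by rw [conjList_sum L hsort, hsum])
  intro π hπ ρ hρ
  have hbπ := block_multiset_of_mem_Gst s t π hπ
  have hbρ := block_multiset_of_mem_Gst s t ρ hρ
  -- nodup of block images
  have hndρ : ∀ i ∈ Finset.range m, ((blockList s (i+1)).map (pact ρ t)).Nodup := by
    intro i hi
    rw [← Multiset.coe_nodup, hbρ i hi, Multiset.coe_nodup]
    exact List.nodup_range'
  have hndπ : ∀ i ∈ Finset.range m, ((blockList s (i+1)).map (pact π t)).Nodup := by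
    intro i hi
    rw [← Multiset.coe_nodup, hbπ i hi, Multiset.coe_nodup]
    exact List.nodup_range'
  -- existence of matching position
  have hex : ∀ p : Fin m, ∃ q : Fin m, s q = s p ∧ pact ρ t q = pact π t p := by
    intro p
    obtain ⟨i, hi, hip⟩ := hranges p
    have hpB : p ∈ blockList s (i+1) := (mem_blockList s (i+1) p).mpr hip
    have hmem : pact π t p ∈ ((blockList s (i+1)).map (pact π t) : List ℕ) :=
      List.mem_map_of_mem hpB
    have hmem2 : pact π t p ∈ (((blockList s (i+1)).map (pact ρ t) : List ℕ) : Multiset ℕ) := by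
      rw [hbρ i hi]
      have h3 : pact π t p ∈ (((blockList s (i+1)).map (pact π t) : List ℕ) : Multiset ℕ) := hmem
      rw [hbπ i hi] at h3
      have hleneq : ((blockList s (i+1)).map (pact π t)).length
          = ((blockList s (i+1)).map (pact ρ t)).length := by
        rw [List.length_map, List.length_map]
      rw [← hleneq]
      exact h3
    rw [Multiset.mem_coe, List.mem_map] at hmem2
    obtain ⟨q, hqB, hq⟩ := hmem2
    exact ⟨q, (mem_blockList s (i+1) q).mp hqB ▸ hip ▸ rfl, hq⟩
  choose g hg1 hg2 using hex
  have hginj : Function.Injective g := by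
    intro p p' hpp'
    have hsp : s p = s p' := by rw [← hg1 p, ← hg1 p', hpp']
    have huv : pact π t p = pact π t p' := by rw [← hg2 p, ← hg2 p', hpp']
    obtain ⟨i, hi, hip⟩ := hranges p
    have hpB : p ∈ blockList s (i+1) := (mem_blockList s (i+1) p).mpr hip
    have hpB' : p' ∈ blockList s (i+1) := (mem_blockList s (i+1) p').mpr (hsp ▸ hip)
    exact List.inj_on_of_nodup_map (hndπ i hi) hpB hpB' huv
  let γ : Equiv.Perm (Fin m) := Equiv.ofBijective g ((Finite.injective_iff_bijective).mp hginj)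
  have hγapp : ∀ p, γ p = g p := fun p => rfl
  have hγs : ∀ x, s (γ x) = s x := fun x => hg1 x
  have hγs' : ∀ x, s (γ⁻¹ x) = s x := by
    intro x
    conv_rhs => rw [← Equiv.apply_symm_apply γ x]
    rw [← hγs (γ⁻¹ x)]
    rfl
  set β := π⁻¹ * γ⁻¹ * ρ with hβdef
  have hρeq : ρ = γ * π * β := by rw [hβdef]; group
  have hβt : ∀ q, t (β q) = t q := by
    intro q
    have h2 := hg2 (γ⁻¹ (ρ q))
    have hγγ : γ (γ⁻¹ (ρ q)) = ρ q := Equiv.apply_symm_apply γ (ρ q)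
    rw [hγapp] at hγγ  -- g (γ⁻¹ (ρ q)) = ρ q
    have hβq : β q = π⁻¹ (γ⁻¹ (ρ q)) := rfl
    calc t (β q) = t (π⁻¹ (γ⁻¹ (ρ q))) := by rw [hβq]
      _ = pact π t (γ⁻¹ (ρ q)) := rfl
      _ = pact ρ t (g (γ⁻¹ (ρ q))) := (h2).symm
      _ = t (ρ⁻¹ (ρ q)) := by rw [hγγ]; rfl
      _ = t q := by simp
  have hβ't : ∀ q, t (β⁻¹ q) = t q := by
    intro q
    conv_rhs => rw [show q = β (β⁻¹ q) by simp]
    rw [hβt (β⁻¹ q)]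
  -- rewrite ρ side
  have hβfix : pact β t = t := funext (fun q => hβ't q)
  have e1 : pact ρ t = pact γ (pact π t) := by
    rw [hρeq, pact_mul, pact_mul, hβfix]
  have hγfix : pact γ⁻¹ s = s := by
    funext x
    show s ((γ⁻¹)⁻¹ x) = s x
    rw [inv_inv]
    exact hγs x
  have e2 : pact ρ⁻¹ s = pact β⁻¹ (pact π⁻¹ s) := by
    rw [hρeq]
    have hinv : (γ * π * β)⁻¹ = β⁻¹ * π⁻¹ * γ⁻¹ := by group
    rw [hinv, pact_mul, pact_mul, hγfix]
  have hA := sgnWord_pact_stab s (pact π t) hranges γ hγs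
  have hC := sgnWord_pact_stab t (pact π⁻¹ s) hranget β⁻¹ hβ't
  rw [e1, e2, hA, hC]
  have hsignρ : ((Equiv.Perm.sign ρ : ℤˣ) : ℤ)
      = ((Equiv.Perm.sign γ : ℤˣ) : ℤ) * ((Equiv.Perm.sign π : ℤˣ) : ℤ)
        * ((Equiv.Perm.sign β : ℤˣ) : ℤ) := by
    rw [hρeq]
    push_cast [Equiv.Perm.sign_mul]
    ring
  have hsignβ : ((Equiv.Perm.sign β⁻¹ : ℤˣ) : ℤ) = ((Equiv.Perm.sign β : ℤˣ) : ℤ) := by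
    rw [Equiv.Perm.sign_inv]
  have hγ2 : ((Equiv.Perm.sign γ : ℤˣ) : ℤ) * ((Equiv.Perm.sign γ : ℤˣ) : ℤ) = 1 := by
    rw [← Units.val_mul, Int.units_mul_self]; rfl
  have hβ2 : ((Equiv.Perm.sign β : ℤˣ) : ℤ) * ((Equiv.Perm.sign β : ℤˣ) : ℤ) = 1 := by
    rw [← Units.val_mul, Int.units_mul_self]; rfl
  rw [hsignρ, hsignβ]
  calc sgnWord s (pact π t) * ((Equiv.Perm.sign π : ℤˣ) : ℤ) * sgnWord t (pact π⁻¹ s)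
      = (((Equiv.Perm.sign γ : ℤˣ) : ℤ) * ((Equiv.Perm.sign γ : ℤˣ) : ℤ))
        * ((((Equiv.Perm.sign β : ℤˣ) : ℤ) * ((Equiv.Perm.sign β : ℤˣ) : ℤ))
        * (sgnWord s (pact π t) * ((Equiv.Perm.sign π : ℤˣ) : ℤ) * sgnWord t (pact π⁻¹ s))) := by
        rw [hγ2, hβ2]; ring
    _ = ((Equiv.Perm.sign γ : ℤˣ) : ℤ) * sgnWord s (pact π t)
        * (((Equiv.Perm.sign γ : ℤˣ) : ℤ) * ((Equiv.Perm.sign π : ℤˣ) : ℤ)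
          * ((Equiv.Perm.sign β : ℤˣ) : ℤ))
        * (((Equiv.Perm.sign β : ℤˣ) : ℤ) * sgnWord t (pact π⁻¹ s)) := by ring
end
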